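/- A k-regular graph of girth 5 and diameter 2 (k ≥ 3) has exactly 3 distinct distance eigenvalues. -/
import Mathlib


open Matrix

/-- The distance matrix of a graph, with real entries. -/
noncomputable def distMatrix {V : Type*} [Fintype V] (G : SimpleGraph V) : Matrix V V ℝ :=
  fun u v => (G.dist u v : ℝ)

/-- Spectrum membership for a real matrix via eigenvectors. -/
lemma matrix_mem_spectrum_iff_aux {n : Type*} [Fintype n] [DecidableEq n]
    {M : Matrix n n ℝ} {μ : ℝ} :
    μ ∈ spectrum ℝ M ↔ ∃ x : n → ℝ, x ≠ 0 ∧ M *ᵥ x = μ • x := by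
  rw [← AlgEquiv.spectrum_eq (Matrix.toLinAlgEquiv' : Matrix n n ℝ ≃ₐ[ℝ] Module.End ℝ (n → ℝ)) M,
    ← Module.End.hasEigenvalue_iff_mem_spectrum]
  constructor
  · intro h
    obtain ⟨x, hx, hx0⟩ := h.exists_hasEigenvector
    refine ⟨x, hx0, ?_⟩
    have := Module.End.mem_eigenspace_iff.mp hx
    rwa [show (Matrix.toLinAlgEquiv' M : Module.End ℝ (n → ℝ)) x = M *ᵥ x from rfl] at this
  · rintro ⟨x, hx0, hx⟩
    refine Module.End.hasEigenvalue_of_hasEigenvector ⟨Module.End.mem_eigenspace_iff.mpr ?_, hx0⟩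
    rwa [show (Matrix.toLinAlgEquiv' M : Module.End ℝ (n → ℝ)) x = M *ᵥ x from rfl]

lemma quad_expand_aux {n : Type*} [Fintype n] [DecidableEq n] (M : Matrix n n ℝ) (a b : ℝ) :
    (M - a • 1) * (M - b • 1) = M * M - (a + b) • M + (a * b) • (1 : Matrix n n ℝ) := by
  simp only [sub_mul, mul_sub, Matrix.smul_mul, Matrix.mul_smul, Matrix.one_mul, Matrix.mul_one,
    smul_smul]
  module

set_option maxHeartbeats 2000000 in
/-- A `k`-regular graph of girth `5` and diameter `2` (`k ≥ 3`) has exactly `3` distinct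
distance eigenvalues. -/
theorem moore_girth_five_three_distinct_distance_eigenvalues {V : Type*} [Fintype V]
    [DecidableEq V] (G : SimpleGraph V) [DecidableRel G.Adj] (k : ℕ) (hk : 3 ≤ k)
    (hreg : G.IsRegularOfDegree k) (hgirth : G.girth = 5) (hdiam : G.diam = 2) :
    (spectrum ℝ (distMatrix G)).ncard = 3 := by
  classical
  -- basic setup
  have hVnt : Nontrivial V := G.nontrivial_of_diam_ne_zero (by omega)
  have hVne : Nonempty V := inferInstance
  have hediam : G.ediam ≠ ⊤ := G.ediam_ne_top_of_diam_ne_zero (by omega)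
  have hreach : ∀ u v : V, G.Reachable u v := fun u v =>
    G.reachable_of_edist_ne_top (fun h => hediam (top_le_iff.mp (h ▸ G.edist_le_ediam)))
  have hdle : ∀ u v : V, G.dist u v ≤ 2 := fun u v => hdiam ▸ G.dist_le_diam hediam
  have hdist2 : ∀ u v : V, u ≠ v → ¬ G.Adj u v → G.dist u v = 2 := by
    intro u v hne hadj
    have h0 : G.dist u v ≠ 0 := by
      rw [SimpleGraph.dist_ne_zero_iff_ne_and_reachable]; exact ⟨hne, hreach u v⟩
    have h1 : G.dist u v ≠ 1 := fun h => hadj (SimpleGraph.dist_eq_one_iff_adj.mp h)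
    have := hdle u v; omega
  -- girth facts
  have hegirth : G.egirth = 5 := by
    have h5 : G.girth = 5 := hgirth
    rw [SimpleGraph.girth] at h5
    exact (ENat.toNat_eq_iff (by norm_num)).mp h5
  have hcyc : ∀ (a : V) (w : G.Walk a a), w.IsCycle → 5 ≤ w.length := by
    intro a w hw
    have := SimpleGraph.le_egirth.mp hegirth.ge a w hw
    exact_mod_cast this
  have notriangle : ∀ {a b c : V}, G.Adj a b → G.Adj b c → G.Adj c a → False := by
    intro a b c hab hbc hca
    have h1 : a ≠ b := hab.ne
    have h2 : b ≠ c := hbc.ne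
    have h3 : c ≠ a := hca.ne
    refine absurd (hcyc a (.cons hab (.cons hbc (.cons hca .nil))) ?_) (by simp)
    rw [SimpleGraph.Walk.isCycle_def]
    refine ⟨?_, by simp, ?_⟩
    · rw [SimpleGraph.Walk.isTrail_def]
      simp [Sym2.eq_iff]
      tauto
    · simp
      tauto
  have noC4 : ∀ {a b c d : V}, a ≠ c → b ≠ d → G.Adj a b → G.Adj b c → G.Adj c d → G.Adj d a →
      False := by
    intro a b c d hac hbd hab hbc hcd hda
    have h1 : a ≠ b := hab.ne
    have h2 : b ≠ c := hbc.ne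
    have h3 : c ≠ d := hcd.ne
    have h4 : d ≠ a := hda.ne
    refine absurd (hcyc a (.cons hab (.cons hbc (.cons hcd (.cons hda .nil)))) ?_) (by simp)
    rw [SimpleGraph.Walk.isCycle_def]
    refine ⟨?_, by simp, ?_⟩
    · rw [SimpleGraph.Walk.isTrail_def]
      simp [Sym2.eq_iff]
      tauto
    · simp
      tauto
  -- matrices
  set n : ℕ := Fintype.card V with hn
  set A : Matrix V V ℝ := G.adjMatrix ℝ with hA
  set J : Matrix V V ℝ := Matrix.of (fun _ _ => (1 : ℝ)) with hJ
  -- common neighbor counts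
  have hcn : ∀ u v : V, u ≠ v → ¬ G.Adj u v →
      ∃! w, w ∈ (G.neighborFinset u).filter (fun w => G.Adj w v) := by
    intro u v hne hadj
    obtain ⟨p, hp⟩ := (hreach u v).exists_walk_length_eq_dist
    rw [hdist2 u v hne hadj] at hp
    obtain ⟨w, hw, q, rfl⟩ : ∃ (w : V) (h : G.Adj u w) (q : G.Walk w v),
        p = SimpleGraph.Walk.cons h q := by
      cases p with
      | nil => simp at hp
      | cons h q => exact ⟨_, h, q, rfl⟩
    have hq1 : q.length = 1 := by simpa using hp
    have hwv : G.Adj w v := by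
      cases q with
      | nil => simp at hq1
      | cons h' q' =>
        have : q'.length = 0 := by simpa using hq1
        have := SimpleGraph.Walk.eq_of_length_eq_zero this
        exact this ▸ h'
    refine ⟨w, ?_, ?_⟩
    · simp [SimpleGraph.mem_neighborFinset, hw, hwv]
    · intro w' hw'
      simp only [Finset.mem_filter, SimpleGraph.mem_neighborFinset] at hw'
      by_contra hne'
      exact noC4 hne hne' hw'.1 hw'.2 hwv.symm hw.symm

  -- entry formula for A * A
  have hform : ∀ u v : V, (A * A) u v =
      (((G.neighborFinset u).filter (fun w => G.Adj w v)).card : ℝ) := by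
    intro u v
    rw [hA, SimpleGraph.adjMatrix_mul_apply]
    simp [SimpleGraph.adjMatrix_apply, Finset.sum_boole]
  have hA2 : A * A = J - A + ((k : ℝ) - 1) • 1 := by
    ext u v
    rw [hform]
    by_cases huv : u = v
    · subst huv
      have h1 : (G.neighborFinset u).filter (fun w => G.Adj w u) = G.neighborFinset u := by
        apply Finset.filter_true_of_mem
        intro w hw
        exact ((SimpleGraph.mem_neighborFinset G u w).mp hw).symm
      rw [h1, SimpleGraph.card_neighborFinset_eq_degree, hreg u]
      simp [hJ, hA, Matrix.one_apply, SimpleGraph.adjMatrix_apply]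
    · by_cases hadj : G.Adj u v
      · have h1 : (G.neighborFinset u).filter (fun w => G.Adj w v) = ∅ := by
          rw [Finset.eq_empty_iff_forall_notMem]
          intro w hw
          simp only [Finset.mem_filter, SimpleGraph.mem_neighborFinset] at hw
          exact notriangle hw.1 hw.2 hadj.symm
        rw [h1]
        simp [hJ, hA, Matrix.one_apply_ne huv, SimpleGraph.adjMatrix_apply, hadj]
      · obtain ⟨w, hw, huniq⟩ := hcn u v huv hadj
        have h1 : (G.neighborFinset u).filter (fun w => G.Adj w v) = {w} := by
          apply Finset.eq_singleton_iff_unique_mem.mpr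
          exact ⟨hw, huniq⟩
        rw [h1]
        simp [hJ, hA, Matrix.one_apply_ne huv, SimpleGraph.adjMatrix_apply, hadj]
  have hAJ : A * J = (k : ℝ) • J := by
    ext u v
    rw [hA, SimpleGraph.adjMatrix_mul_apply]
    simp [hJ, SimpleGraph.card_neighborFinset_eq_degree, hreg u]
  have hJA : J * A = (k : ℝ) • J := by
    ext u v
    rw [hA, SimpleGraph.mul_adjMatrix_apply]
    simp [hJ, SimpleGraph.card_neighborFinset_eq_degree, hreg v]
  have hJJ : J * J = (n : ℝ) • J := by
    ext u v
    simp [hJ, Matrix.mul_apply, hn]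
  have hDr : distMatrix G = (2 : ℝ) • J - (2 : ℝ) • 1 - A := by
    ext u v
    simp only [distMatrix, Matrix.sub_apply, Matrix.smul_apply, Matrix.of_apply, hJ, hA,
      SimpleGraph.adjMatrix_apply, Matrix.one_apply, smul_eq_mul]
    by_cases huv : u = v
    · subst huv
      simp [SimpleGraph.dist_self, G.irrefl]
    · by_cases hadj : G.Adj u v
      · rw [SimpleGraph.dist_eq_one_iff_adj.mpr hadj]
        simp [huv, hadj]
        norm_num
      · rw [hdist2 u v huv hadj]
        simp [huv, hadj]
  set D : Matrix V V ℝ := distMatrix G with hDdef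
  -- scalar facts
  have hk3 : (3 : ℝ) ≤ (k : ℝ) := by exact_mod_cast hk
  have hnk : (k : ℝ) + 1 ≤ (n : ℝ) := by
    obtain ⟨v⟩ := hVne
    have h1 : (insert v (G.neighborFinset v)).card ≤ n :=
      hn ▸ Finset.card_le_univ _
    rw [Finset.card_insert_of_notMem (G.notMem_neighborFinset_self v),
      SimpleGraph.card_neighborFinset_eq_degree, hreg v] at h1
    exact_mod_cast h1
  set s : ℝ := Real.sqrt (4 * k - 3) with hsdef
  have hs0 : 0 ≤ s := Real.sqrt_nonneg _
  have hs2 : s * s = 4 * (k : ℝ) - 3 := Real.mul_self_sqrt (by nlinarith)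
  have hs3 : 3 ≤ s := by nlinarith
  have hslt : s < 2 * (k : ℝ) := by nlinarith
  set μ0 : ℝ := 2 * (n : ℝ) - 2 - (k : ℝ) with hmu0def
  set μ1 : ℝ := (-3 - s) / 2 with hmu1def
  set μ2 : ℝ := (-3 + s) / 2 with hmu2def
  have hsum : μ1 + μ2 = -3 := by rw [hmu1def, hmu2def]; ring
  have hprod : μ1 * μ2 = 3 - (k : ℝ) := by
    rw [hmu1def, hmu2def]; linear_combination (-(1 : ℝ)/4) * hs2
  -- matrix algebra
  have hD2 : D * D = (4 * (n : ℝ) - 4 * k - 7) • J + (3 : ℝ) • A + ((k : ℝ) + 3) • 1 := by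
    rw [hDr]
    simp only [sub_mul, mul_sub, Matrix.smul_mul, Matrix.mul_smul, Matrix.one_mul,
      Matrix.mul_one, hJJ, hJA, hAJ, hA2, smul_smul, smul_sub, smul_add]
    module
  have hDmu0J : (D - μ0 • 1) * J = 0 := by
    rw [sub_mul, Matrix.smul_mul, Matrix.one_mul, hDr]
    simp only [sub_mul, Matrix.smul_mul, Matrix.one_mul, hJJ, hAJ]
    rw [hmu0def]
    module
  have hq2 : (D - μ1 • 1) * (D - μ2 • 1) = (4 * (n : ℝ) - 4 * k - 1) • J := by
    rw [quad_expand_aux, hsum, hprod, hD2, hDr]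
    module
  have hq3 : (D - μ0 • 1) * ((D - μ1 • 1) * (D - μ2 • 1)) = 0 := by
    rw [hq2, Matrix.mul_smul, hDmu0J, smul_zero]
  have hcom : ∀ a b : ℝ, Commute (D - a • 1) (D - b • 1) := by
    intro a b
    show _ = _
    rw [quad_expand_aux, quad_expand_aux, add_comm b a, mul_comm b a]
  -- μ0 is an eigenvalue
  have hones : D *ᵥ (Function.const V (1 : ℝ)) = μ0 • (Function.const V (1 : ℝ)) := by
    funext w
    rw [hDr]
    rw [Matrix.sub_mulVec, Matrix.sub_mulVec, Matrix.smul_mulVec,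
      Matrix.smul_mulVec, Matrix.one_mulVec]
    have h1 : (J *ᵥ Function.const V (1 : ℝ)) w = (n : ℝ) := by
      simp [hJ, Matrix.mulVec, dotProduct, hn]
    have h2 : (A *ᵥ Function.const V (1 : ℝ)) w = (k : ℝ) := by
      rw [hA, SimpleGraph.adjMatrix_mulVec_const_apply_of_regular hreg]
      simp
    simp only [Pi.sub_apply, Pi.smul_apply, h1, h2, Function.const_apply, smul_eq_mul]
    rw [hmu0def]; ring
  have hmem0 : μ0 ∈ spectrum ℝ D := by
    refine matrix_mem_spectrum_iff_aux.mpr ⟨Function.const V 1, ?_, hones⟩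
    intro h
    have := congrFun h (Classical.arbitrary V)
    simp [Function.const] at this
  -- entry-evaluation tool
  obtain ⟨u₀, v₀, huv0⟩ := SimpleGraph.exists_dist_eq_diam (G := G)
  rw [hdiam] at huv0
  have hne0 : u₀ ≠ v₀ := by
    intro h; rw [h, SimpleGraph.dist_self] at huv0; omega
  have hnadj0 : ¬ G.Adj u₀ v₀ := by
    intro h; rw [SimpleGraph.dist_eq_one_iff_adj.mpr h] at huv0; omega
  have hw0 : ∃ w, G.Adj u₀ w := by
    have h1 : 0 < (G.neighborFinset u₀).card := by
      rw [SimpleGraph.card_neighborFinset_eq_degree, hreg u₀]; omega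
    obtain ⟨w, hw⟩ := Finset.card_pos.mp h1
    exact ⟨w, (SimpleGraph.mem_neighborFinset G u₀ w).mp hw⟩
  obtain ⟨w₀, hadj0⟩ := hw0
  have key : ∀ cJ cA cI : ℝ, cJ • J + cA • A + cI • (1 : Matrix V V ℝ) = 0 → cA = 0 := by
    intro cJ cA cI h
    have h1 : (cJ • J + cA • A + cI • (1 : Matrix V V ℝ)) u₀ v₀ = 0 := by rw [h]; rfl
    have h2 : (cJ • J + cA • A + cI • (1 : Matrix V V ℝ)) u₀ w₀ = 0 := by rw [h]; rfl
    simp only [Matrix.add_apply, Matrix.smul_apply, hJ, Matrix.of_apply, hA,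
      SimpleGraph.adjMatrix_apply, Matrix.one_apply, smul_eq_mul] at h1 h2
    rw [if_neg hnadj0, if_neg hne0] at h1
    rw [if_pos hadj0, if_neg hadj0.ne] at h2
    simp at h1 h2
    linarith
  -- μ1 is an eigenvalue
  have hmem1 : μ1 ∈ spectrum ℝ D := by
    by_contra hns
    have hiu : IsUnit (D - μ1 • 1) := by
      have h1 := spectrum.notMem_iff.mp hns
      rw [Algebra.algebraMap_eq_smul_one] at h1
      simpa [neg_sub] using h1.neg
    have hre : (D - μ1 • 1) * ((D - μ0 • 1) * (D - μ2 • 1)) = 0 := by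
      calc (D - μ1 • 1) * ((D - μ0 • 1) * (D - μ2 • 1))
          = ((D - μ1 • 1) * (D - μ0 • 1)) * (D - μ2 • 1) := by rw [mul_assoc]
        _ = ((D - μ0 • 1) * (D - μ1 • 1)) * (D - μ2 • 1) := by rw [(hcom μ1 μ0).eq]
        _ = (D - μ0 • 1) * ((D - μ1 • 1) * (D - μ2 • 1)) := by rw [mul_assoc]
        _ = 0 := hq3
    have hzero : (D - μ0 • 1) * (D - μ2 • 1) = 0 :=
      (IsUnit.mul_right_eq_zero hiu).mp hre
    have hexp : (D - μ0 • 1) * (D - μ2 • 1) =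
        (4 * (n : ℝ) - 4 * k - 7 - 2 * (μ0 + μ2)) • J + (3 + (μ0 + μ2)) • A +
          ((k : ℝ) + 3 + 2 * (μ0 + μ2) + μ0 * μ2) • 1 := by
      rw [quad_expand_aux, hD2, hDr]
      module
    have hca := key _ _ _ (hexp ▸ hzero)
    rw [hmu0def, hmu2def] at hca
    nlinarith
  -- μ2 is an eigenvalue
  have hmem2 : μ2 ∈ spectrum ℝ D := by
    by_contra hns
    have hiu : IsUnit (D - μ2 • 1) := by
      have h1 := spectrum.notMem_iff.mp hns
      rw [Algebra.algebraMap_eq_smul_one] at h1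
      simpa [neg_sub] using h1.neg
    have hre : (D - μ2 • 1) * ((D - μ0 • 1) * (D - μ1 • 1)) = 0 := by
      calc (D - μ2 • 1) * ((D - μ0 • 1) * (D - μ1 • 1))
          = ((D - μ0 • 1) * (D - μ1 • 1)) * (D - μ2 • 1) := by
            rw [((hcom μ0 μ2).mul_left (hcom μ1 μ2)).eq]
        _ = (D - μ0 • 1) * ((D - μ1 • 1) * (D - μ2 • 1)) := by rw [mul_assoc]
        _ = 0 := hq3
    have hzero : (D - μ0 • 1) * (D - μ1 • 1) = 0 :=
      (IsUnit.mul_right_eq_zero hiu).mp hre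
    have hexp : (D - μ0 • 1) * (D - μ1 • 1) =
        (4 * (n : ℝ) - 4 * k - 7 - 2 * (μ0 + μ1)) • J + (3 + (μ0 + μ1)) • A +
          ((k : ℝ) + 3 + 2 * (μ0 + μ1) + μ0 * μ1) • 1 := by
      rw [quad_expand_aux, hD2, hDr]
      module
    have hca := key _ _ _ (hexp ▸ hzero)
    rw [hmu0def, hmu1def] at hca
    nlinarith
  -- spectrum is exactly the three values
  have hspec : spectrum ℝ D = {μ0, μ1, μ2} := by
    apply Set.Subset.antisymm
    · intro μ hμ
      obtain ⟨x, hx0, hx⟩ := matrix_mem_spectrum_iff_aux.mp hμ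
      have hstep : ∀ c : ℝ, (D - c • 1) *ᵥ x = (μ - c) • x := by
        intro c
        rw [Matrix.sub_mulVec, hx, Matrix.smul_mulVec, Matrix.one_mulVec, sub_smul]
      have c1 : (D - μ2 • 1) *ᵥ x = (μ - μ2) • x := hstep _
      have c2 : (D - μ1 • 1) *ᵥ ((μ - μ2) • x) = (μ - μ2) • ((μ - μ1) • x) := by
        rw [Matrix.mulVec_smul, hstep]
      have c3 : (D - μ0 • 1) *ᵥ ((μ - μ2) • ((μ - μ1) • x)) =
          (μ - μ2) • ((μ - μ1) • ((μ - μ0) • x)) := by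
        rw [Matrix.mulVec_smul, Matrix.mulVec_smul, hstep]
      have e1 : (0 : V → ℝ) = (μ - μ2) • ((μ - μ1) • ((μ - μ0) • x)) := by
        calc (0 : V → ℝ) = ((D - μ0 • 1) * ((D - μ1 • 1) * (D - μ2 • 1))) *ᵥ x := by
              rw [hq3, Matrix.zero_mulVec]
          _ = (D - μ0 • 1) *ᵥ ((D - μ1 • 1) *ᵥ ((D - μ2 • 1) *ᵥ x)) := by
              rw [Matrix.mulVec_mulVec, Matrix.mulVec_mulVec, mul_assoc]
          _ = (μ - μ2) • ((μ - μ1) • ((μ - μ0) • x)) := by rw [c1, c2, c3]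
      rw [smul_smul, smul_smul] at e1
      have hz : (μ - μ2) * (μ - μ1) * (μ - μ0) = 0 := by
        by_contra hzz
        exact hx0 (by simpa [hzz] using smul_eq_zero.mp e1.symm)
      rcases mul_eq_zero.mp hz with h | h
      · rcases mul_eq_zero.mp h with h' | h'
        · right; right; exact sub_eq_zero.mp h'
        · right; left; exact sub_eq_zero.mp h'
      · left; exact sub_eq_zero.mp h
    · intro μ hμ
      rcases hμ with rfl | rfl | rfl
      · exact hmem0
      · exact hmem1
      · exact hmem2
  have hd1 : μ1 < μ2 := by rw [hmu1def, hmu2def]; linarith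
  have hd2 : μ2 < μ0 := by rw [hmu0def, hmu2def]; linarith
  rw [hspec]
  exact Set.ncard_eq_three.mpr
    ⟨μ0, μ1, μ2, by linarith, by linarith, by linarith, rfl⟩
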